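/- Let O be a real inner product space, X_h ⊆ O a finite-dimensional subspace, and d : X_h → X_h a linear map with d ∘ d = 0. Then the form a satisfies the following inf–sup estimate with constant 1 relative to the discrete domain seminorm: for every u ∈ X̃_h there exists v ∈ X̃_h with [v]_h ≤ 1 and |a(u, v)| ≥ ‖u‖. -/

import Mathlib

open scoped RealInnerProductSpace

/-- Discrete inf–sup estimate with constant 1 for the Hodge–Dirac form
`a(u,v) = ⟨du, v⟩ + ⟨u, dv⟩` relative to the discrete domain seminorm
`[v]_h² = ‖dv‖² + (sup_{w ≠ 0} |⟨v, dw⟩|/‖w‖)²`: for every `u` in the orthogonal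
complement `X̃_h` of the discrete cohomology `G_h`, there is `v ∈ X̃_h` with `[v]_h ≤ 1`
and `|a(u,v)| ≥ ‖u‖`. -/
theorem discrete_infSup_hodgeDirac
    {O : Type*} [NormedAddCommGroup O] [InnerProductSpace ℝ O]
    (Xh : Submodule ℝ O) [FiniteDimensional ℝ Xh]
    (d : Xh →ₗ[ℝ] Xh) (hd : ∀ x : Xh, d (d x) = 0)
    (u : Xh)
    (hu : ∀ g : Xh, (d g = 0 ∧ ∀ v : Xh, ⟪(g : O), (d v : O)⟫ = 0) →
      ⟪(u : O), (g : O)⟫ = 0) :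
    ∃ v : Xh,
      (∀ g : Xh, (d g = 0 ∧ ∀ w : Xh, ⟪(g : O), (d w : O)⟫ = 0) →
        ⟪(v : O), (g : O)⟫ = 0) ∧
      Real.sqrt (‖(d v : O)‖ ^ 2 +
        (⨆ w : {w : Xh // w ≠ 0}, |⟪(v : O), (d w.1 : O)⟫| / ‖(w.1 : O)‖) ^ 2) ≤ 1 ∧
      ‖(u : O)‖ ≤ |⟪(d u : O), (v : O)⟫ + ⟪(u : O), (d v : O)⟫| := by
  classical
  have hcoe : ∀ x y : Xh, ⟪(x : O), (y : O)⟫ = ⟪x, y⟫ :=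
    fun x y => (Submodule.coe_inner Xh x y).symm
  set ds : Xh →ₗ[ℝ] Xh := LinearMap.adjoint d with hds
  set D : Xh →ₗ[ℝ] Xh := d + ds with hDdef
  have hdds : ∀ x y : Xh, ⟪d x, ds y⟫ = (0 : ℝ) := by
    intro x y
    rw [hds, LinearMap.adjoint_inner_right, hd x, inner_zero_left]
  have hadj : ∀ x y : Xh, ⟪ds x, y⟫ = ⟪x, d y⟫ := fun x y =>
    LinearMap.adjoint_inner_left d y x
  have hadj' : ∀ x y : Xh, ⟪x, ds y⟫ = ⟪d x, y⟫ := fun x y =>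
    LinearMap.adjoint_inner_right d x y
  -- characterize membership of `G_h` as `ker D`
  have hker : ∀ g : Xh,
      (d g = 0 ∧ ∀ w : Xh, ⟪(g : O), (d w : O)⟫ = 0) ↔ D g = 0 := by
    intro g
    constructor
    · rintro ⟨h1, h2⟩
      have h3 : ds g = 0 := by
        have := h2 (ds g)
        rw [hcoe, ← hadj g (ds g)] at this
        exact inner_self_eq_zero.mp (by rw [real_inner_comm] at this; exact this)
      simp [hDdef, LinearMap.add_apply, h1, h3]
    · intro hg
      have h1 : d g = 0 := by
        have h0 : d g + ds g = 0 := by simpa [hDdef, LinearMap.add_apply] using hg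
        have : ⟪d g, d g⟫ = 0 := by
          have := congrArg (fun z => ⟪d g, z⟫) h0
          simpa [inner_add_right, hdds g g] using this
        exact inner_self_eq_zero.mp this
      have h3 : ds g = 0 := by
        have h0 : d g + ds g = 0 := by simpa [hDdef, LinearMap.add_apply] using hg
        rw [h1, zero_add] at h0; exact h0
      refine ⟨h1, fun w => ?_⟩
      rw [hcoe, ← hadj g w, h3, inner_zero_left]
  -- D is symmetric, range D = (ker D)ᗮ
  have hsym : ∀ x y : Xh, ⟪D x, y⟫ = ⟪x, D y⟫ := by
    intro x y
    simp only [hDdef, LinearMap.add_apply, inner_add_left, inner_add_right, hadj, hadj']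
    ring
  have hrangeOrth : (LinearMap.range D)ᗮ = LinearMap.ker D := by
    ext x
    simp only [Submodule.mem_orthogonal, LinearMap.mem_range, LinearMap.mem_ker]
    constructor
    · intro hx
      have hall : ∀ z : Xh, ⟪z, D x⟫ = 0 := by
        intro z
        have := hx (D z) ⟨z, rfl⟩
        rwa [hsym z x] at this
      exact inner_self_eq_zero.mp (hall (D x))
    · intro hx y hy
      obtain ⟨z, rfl⟩ := hy
      rw [hsym z x, hx, inner_zero_right]
  have hrange : LinearMap.range D = (LinearMap.ker D)ᗮ := by
    rw [← hrangeOrth, Submodule.orthogonal_orthogonal]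
  -- u lies in range D
  have huK : u ∈ (LinearMap.ker D)ᗮ := by
    rw [Submodule.mem_orthogonal']
    intro g hg
    rw [← hcoe]
    exact hu g ((hker g).mpr hg)
  obtain ⟨v₀, hv₀⟩ : ∃ v₀, D v₀ = u := by
    have : u ∈ LinearMap.range D := hrange ▸ huK
    exact this
  set v₁ : Xh := v₀ - (Submodule.orthogonalProjectionOnto (LinearMap.ker D) v₀ : Xh) with hv₁def
  have hv₁orth : v₁ ∈ (LinearMap.ker D)ᗮ :=
    Submodule.sub_starProjection_mem_orthogonal (K := LinearMap.ker D) v₀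
  have hDv₁ : D v₁ = u := by
    have hmem : ((Submodule.orthogonalProjectionOnto (LinearMap.ker D) v₀ : Xh)) ∈ LinearMap.ker D :=
      (Submodule.orthogonalProjectionOnto (LinearMap.ker D) v₀).2
    rw [hv₁def, map_sub, hv₀, LinearMap.mem_ker.mp hmem, sub_zero]
  by_cases hu0 : u = 0
  · refine ⟨0, ?_, ?_, ?_⟩
    · intro g _; simp
    · have hS : (⨆ w : {w : Xh // w ≠ 0},
          |⟪((0 : Xh) : O), (d w.1 : O)⟫| / ‖(w.1 : O)‖) = 0 := by
        apply le_antisymm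
        · exact Real.iSup_le (fun w => by simp) le_rfl
        · exact Real.iSup_nonneg fun w => div_nonneg (abs_nonneg _) (norm_nonneg _)
      rw [hS]
      simp
    · subst hu0; simp
  · have hnu : (0 : ℝ) < ‖u‖ := norm_pos_iff.mpr hu0
    set c : ℝ := ‖u‖⁻¹ with hc
    refine ⟨c • v₁, ?_, ?_, ?_⟩
    · intro g hg
      have hgK : g ∈ LinearMap.ker D := (hker g).mp hg
      rw [hcoe]
      have : ⟪v₁, g⟫ = 0 := (Submodule.mem_orthogonal' _ _).mp hv₁orth g hgK
      rw [inner_smul_left]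
      simp [this]
    · -- norm bound
      have hnormsplit : ‖D v₁‖ ^ 2 = ‖d v₁‖ ^ 2 + ‖ds v₁‖ ^ 2 := by
        have := norm_add_sq_real (d v₁) (ds v₁)
        simpa [hDdef, LinearMap.add_apply, hdds v₁ v₁] using this
      have hDv₁n : ‖D v₁‖ = ‖u‖ := by rw [hDv₁]
      have hdsmul : d (c • v₁) = c • d v₁ := map_smul d c v₁
      have hdssmul : ds (c • v₁) = c • ds v₁ := map_smul ds c v₁
      set S : ℝ := ⨆ w : {w : Xh // w ≠ 0},
          |⟪((c • v₁ : Xh) : O), (d w.1 : O)⟫| / ‖(w.1 : O)‖ with hSdef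
      have hS0 : 0 ≤ S :=
        Real.iSup_nonneg fun w => div_nonneg (abs_nonneg _) (norm_nonneg _)
      have hSle : S ≤ ‖ds (c • v₁)‖ := by
        apply Real.iSup_le _ (norm_nonneg _)
        intro w
        have hwpos : (0 : ℝ) < ‖(w.1 : O)‖ := by
          rw [Submodule.norm_coe]
          exact norm_pos_iff.mpr w.2
        rw [div_le_iff₀ hwpos]
        have h1 : ⟪((c • v₁ : Xh) : O), (d w.1 : O)⟫ = ⟪ds (c • v₁), w.1⟫ := by
          rw [hcoe, ← hadj]
        rw [h1, Submodule.norm_coe]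
        exact abs_real_inner_le_norm _ _
      have hsum : ‖(d (c • v₁) : O)‖ ^ 2 + S ^ 2 ≤ 1 := by
        have hS2 : S ^ 2 ≤ ‖ds (c • v₁)‖ ^ 2 := by
          apply pow_le_pow_left₀ hS0 hSle
        have h2 : ‖(d (c • v₁) : O)‖ ^ 2 + ‖ds (c • v₁)‖ ^ 2 = 1 := by
          rw [Submodule.norm_coe, hdsmul, hdssmul, norm_smul, norm_smul]
          have : (‖c‖ * ‖d v₁‖) ^ 2 + (‖c‖ * ‖ds v₁‖) ^ 2
              = ‖c‖ ^ 2 * (‖d v₁‖ ^ 2 + ‖ds v₁‖ ^ 2) := by ring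
          rw [this, ← hnormsplit, hDv₁n, hc, norm_inv, norm_norm]
          field_simp
        linarith
      calc Real.sqrt (‖(d (c • v₁) : O)‖ ^ 2 + S ^ 2) ≤ Real.sqrt 1 :=
            Real.sqrt_le_sqrt hsum
        _ = 1 := Real.sqrt_one
    · -- lower bound
      have hval : ⟪(d u : O), ((c • v₁ : Xh) : O)⟫ + ⟪(u : O), (d (c • v₁) : O)⟫ = ‖u‖ := by
        rw [hcoe, hcoe]
        have h1 : ⟪d u, c • v₁⟫ = ⟪u, ds (c • v₁)⟫ := (hadj' u (c • v₁)).symm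
        rw [h1, ← inner_add_right]
        have hq : ds (c • v₁) + d (c • v₁) = c • u := by
          rw [map_smul, map_smul, ← smul_add]
          rw [show ds v₁ + d v₁ = u from by
            rw [add_comm]; simpa [hDdef, LinearMap.add_apply] using hDv₁]
        rw [hq, real_inner_smul_right, real_inner_self_eq_norm_sq, hc, pow_two, ← mul_assoc,
          inv_mul_cancel₀ hnu.ne', one_mul]
      rw [hval, Submodule.norm_coe, abs_of_nonneg (norm_nonneg _)]
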